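/- arXiv:1606.05975 — 2 statements merged into one kernel-verified Lean document; each statement's English description precedes it below -/
import Mathlib

section
/- Let G be a graph with an ordering σ of width r. Then there exists an ordering τ of V(G) of optimum width, i.e., with cw_τ(G) = cw(G), such that for every prefix X of σ (a set of the form V_v^σ for v ∈ V(G)), the number of X-blocks in τ is at most 2r·cw(G) + cw(G) + 4r + 2. -/
/-- A finite undirected multigraph without loops. -/
structure Multigraph where
  V : Type
  E : Type
  finV : Finite V
  finE : Finite E
  ends : E → V × V
  loopless : ∀ e, (ends e).1 ≠ (ends e).2

attribute [instance] Multigraph.finV Multigraph.finE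

namespace Multigraph

/-- `δ_G(S)`: the number of edges of `G` with exactly one endpoint in `S`. -/
noncomputable def delta (G : Multigraph) (S : Set G.V) : ℕ :=
  {e : G.E | ¬ ((G.ends e).1 ∈ S ↔ (G.ends e).2 ∈ S)}.ncard

/-- The width `cw_σ(G)` of an ordering, represented as an injective ranking `ρ : V → ℕ`. -/
noncomputable def cwOrd (G : Multigraph) (ρ : G.V → ℕ) : ℕ :=
  sSup {w | ∃ v : G.V, w = G.delta {u | ρ u ≤ ρ v}}

/-- The cutwidth of a multigraph. -/
noncomputable def cutwidth (G : Multigraph) : ℕ :=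
  sInf {w | ∃ ρ : G.V → ℕ, Function.Injective ρ ∧ G.cwOrd ρ = w}

/-- Walks in a multigraph. -/
inductive Walk (G : Multigraph) : G.V → G.V → Type
  | nil (v : G.V) : Walk G v v
  | cons {u v w : G.V} (e : G.E)
      (h : G.ends e = (u, v) ∨ G.ends e = (v, u)) (p : Walk G v w) : Walk G u w

namespace Walk

def edges {G : Multigraph} : ∀ {u v : G.V}, G.Walk u v → List G.E
  | _, _, .nil _ => []
  | _, _, .cons e _ p => e :: p.edges

def support {G : Multigraph} : ∀ {u v : G.V}, G.Walk u v → List G.V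
  | _, _, .nil v => [v]
  | u, _, .cons _ _ p => u :: p.support

end Walk

def Connected (G : Multigraph) : Prop := ∀ u v : G.V, Nonempty (G.Walk u v)

/-- An immersion model of `H` in `G`. -/
structure ImmersionModel (H G : Multigraph) where
  vmap : H.V → G.V
  inj : Function.Injective vmap
  emap : (e : H.E) → G.Walk (vmap (H.ends e).1) (vmap (H.ends e).2)
  isPath : ∀ e, ((emap e).support).Nodup
  edgeDisj : ∀ e e', e ≠ e' → ∀ f, f ∈ (emap e).edges → f ∉ (emap e').edges

/-- `H ≤_i G`. -/
def Immersion (H G : Multigraph) : Prop := Nonempty (ImmersionModel H G)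

/-- A strong immersion model: no internal vertex of a path is a branch vertex. -/
structure StrongImmersionModel (H G : Multigraph) extends ImmersionModel H G where
  strong : ∀ e, ∀ x, x ∈ (emap e).support →
    x ≠ vmap (H.ends e).1 → x ≠ vmap (H.ends e).2 → x ∉ Set.range vmap

/-- `H ≤_si G`. -/
def StrongImmersion (H G : Multigraph) : Prop := Nonempty (StrongImmersionModel H G)

/-- Isomorphism of multigraphs. -/
structure Iso (G H : Multigraph) where
  fv : G.V ≃ H.V
  fe : G.E ≃ H.E
  pres : ∀ e, H.ends (fe e) = (fv (G.ends e).1, fv (G.ends e).2)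
           ∨ H.ends (fe e) = (fv (G.ends e).2, fv (G.ends e).1)

def Isomorphic (G H : Multigraph) : Prop := Nonempty (Iso G H)

/-- The minimal obstruction set of a class `C` with respect to a partial order `le`. -/
def obstructions (le : Multigraph → Multigraph → Prop) (C : Set Multigraph) :
    Set Multigraph :=
  {G | G ∉ C ∧ ∀ G', le G' G → ¬ G'.Isomorphic G → G' ∈ C}

/-- `C_k`: the class of multigraphs of cutwidth at most `k`. -/
def cutwidthClass (k : ℕ) : Set Multigraph := {G | G.cutwidth ≤ k}

/-- The degree of a vertex (each parallel edge counts once at each endpoint). -/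
noncomputable def degree (G : Multigraph) (v : G.V) : ℕ :=
  {e : G.E | (G.ends e).1 = v ∨ (G.ends e).2 = v}.ncard

/-- The number of `A`-blocks of an ordering `ρ`: the number of maximal runs of
consecutive (in `ρ`) vertices belonging to `A`, counted via block-starting vertices. -/
noncomputable def blockCount (G : Multigraph) (ρ : G.V → ℕ) (A : Set G.V) : ℕ :=
  {v : G.V | v ∈ A ∧ ∀ u : G.V, ρ u < ρ v →
      ∃ w : G.V, w ∉ A ∧ ρ u ≤ ρ w ∧ ρ w < ρ v}.ncard

/-- The extension `G*` of a `k`-boundaried graph `(G, x)`. -/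
def extension (G : Multigraph) {k : ℕ} (x : Fin k → G.V) : Multigraph where
  V := G.V ⊕ Fin k
  E := G.E ⊕ Fin k
  finV := inferInstance
  finE := inferInstance
  ends := Sum.elim (fun e => (Sum.inl (G.ends e).1, Sum.inl (G.ends e).2))
                   (fun i => (Sum.inl (x i), Sum.inr i))
  loopless := by
    rintro (e | i)
    · simpa using G.loopless e
    · simp

/-- The join `𝐀 ⊕ 𝐁` of two `k`-boundaried graphs. -/
def join {k : ℕ} (A B : Multigraph) (x : Fin k → A.V) (y : Fin k → B.V) : Multigraph where
  V := A.V ⊕ B.V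
  E := (A.E ⊕ B.E) ⊕ Fin k
  finV := inferInstance
  finE := inferInstance
  ends := Sum.elim
    (Sum.elim (fun e => (Sum.inl (A.ends e).1, Sum.inl (A.ends e).2))
              (fun e => (Sum.inr (B.ends e).1, Sum.inr (B.ends e).2)))
    (fun i => (Sum.inl (x i), Sum.inr (y i)))
  loopless := by
    rintro ((e | e) | i)
    · simpa using A.loopless e
    · simpa using B.loopless e
    · simp

/-- An `ℓ`-bucketing of an ordering `ρ` (buckets indexed 1,…,ℓ). -/
def IsBucketing (G : Multigraph) (ρ : G.V → ℕ) (ℓ : ℕ) (T : G.V → ℕ) : Prop :=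
  (∀ v, 1 ≤ T v ∧ T v ≤ ℓ) ∧ ∀ u v : G.V, ρ u ≤ ρ v → T u ≤ T v

/-- `width(G,σ,T,i)`: the maximum size of a cut in `cuts(G,σ,T,i)`; these cuts
are described by their left side `S`, which contains all buckets before `i`,
a `σ`-downward-closed part of bucket `i`, and nothing else. -/
noncomputable def bucketWidth (G : Multigraph) (ρ : G.V → ℕ) (T : G.V → ℕ) (i : ℕ) : ℕ :=
  sSup {w | ∃ S : Set G.V,
    (∀ v, T v < i → v ∈ S) ∧ (∀ v ∈ S, T v ≤ i) ∧
    (∀ u v : G.V, T u = i → T v = i → ρ u ≤ ρ v → v ∈ S → u ∈ S) ∧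
    w = G.delta S}

/-- A `(k,ℓ)`-bucket interface. -/
structure BucketInterface (k ℓ : ℕ) where
  b : Fin k → ℕ
  b' : Fin k → ℕ
  mu : ℕ → ℕ
  mu' : ℕ → ℕ
  b_mem : ∀ i, b i ∈ Set.Icc 1 ℓ
  b'_mem : ∀ i, b' i ∈ Set.Icc 1 ℓ
  mu_le : ∀ j, mu j ≤ k
  mu'_le : ∀ j, mu' j ≤ k

/-- A `k`-boundaried graph `(G, x)` conforms with a `(k,ℓ)`-bucket interface. -/
def Conforms {k : ℕ} (G : Multigraph) (x : Fin k → G.V) (ℓ : ℕ)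
    (I : BucketInterface k ℓ) : Prop :=
  ∃ ρ : (G.extension x).V → ℕ, Function.Injective ρ ∧
  ∃ T : (G.extension x).V → ℕ, (G.extension x).IsBucketing ρ ℓ T ∧
    (∀ v : G.V, Odd (T (Sum.inl v))) ∧
    (∀ i : Fin k, Even (T (Sum.inr i))) ∧
    (∀ i : Fin k, T (Sum.inl (x i)) = I.b i) ∧
    (∀ i : Fin k, T (Sum.inr i) = I.b' i) ∧
    (∀ j ∈ Set.Icc 1 ℓ,
      G.bucketWidth (fun v => ρ (Sum.inl v)) (fun v => T (Sum.inl v)) j ≤ I.mu j) ∧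
    (∀ j ∈ Set.Icc 1 ℓ, (G.extension x).bucketWidth ρ T j ≤ I.mu' j)

/-- `m` pairwise edge-disjoint paths between the sets `X` and `Y`. -/
def ConnectorBetween (G : Multigraph) (X Y : Set G.V) (m : ℕ) : Prop :=
  ∃ (s t : Fin m → G.V) (P : (i : Fin m) → G.Walk (s i) (t i)),
    (∀ i, s i ∈ X) ∧ (∀ i, t i ∈ Y) ∧ (∀ i, (P i).support.Nodup) ∧
    ∀ i j, i ≠ j → ∀ f, f ∈ (P i).edges → f ∉ (P j).edges

/-- A linked ordering. -/
def Linked (G : Multigraph) (ρ : G.V → ℕ) : Prop :=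
  ∀ u u' : G.V, ρ u ≤ ρ u' →
    G.ConnectorBetween {z | ρ z ≤ ρ u} {z | ¬ ρ z ≤ ρ u'}
      (sInf {w | ∃ v : G.V, ρ u ≤ ρ v ∧ ρ v ≤ ρ u' ∧ w = G.delta {z | ρ z ≤ ρ v}})

/-- The multigraph obtained by deleting a set of edges. -/
def deleteEdges (G : Multigraph) (F : Set G.E) : Multigraph where
  V := G.V
  E := {e : G.E // e ∉ F}
  finV := G.finV
  finE := inferInstance
  ends e := G.ends e.1
  loopless e := G.loopless e.1

/-- `dcw_k(G)`: minimum number of edges to delete to reach cutwidth at most `k`. -/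
noncomputable def dcw (k : ℕ) (G : Multigraph) : ℕ :=
  sInf {w | ∃ F : Set G.E, (G.deleteEdges F).cutwidth ≤ k ∧ F.ncard = w}

/-- The class `C_{w,k}`. -/
def dcwClass (w k : ℕ) : Set Multigraph := {G | dcw k G ≤ w}

/-- Induced subgraph `G[X]`. -/
def induce (G : Multigraph) (X : Set G.V) : Multigraph where
  V := X
  E := {e : G.E // (G.ends e).1 ∈ X ∧ (G.ends e).2 ∈ X}
  finV := inferInstance
  finE := inferInstance
  ends e := (⟨(G.ends e.1).1, e.2.1⟩, ⟨(G.ends e.1).2, e.2.2⟩)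
  loopless := by
    intro e h
    exact G.loopless e.1 (Subtype.ext_iff.mp h)

/-- A graph is `ℋ`-immersion-free if it contains no member of `ℋ` as an immersion. -/
def ImmersionFree (H : Set Multigraph) (G : Multigraph) : Prop :=
  ∀ X ∈ H, ¬ Immersion X G

/-- `aic_ℋ(G)`: minimum number of edge deletions to reach an `ℋ`-immersion-free graph. -/
noncomputable def aic (H : Set Multigraph) (G : Multigraph) : ℕ :=
  sInf {w | ∃ F : Set G.E, ImmersionFree H (G.deleteEdges F) ∧ F.ncard = w}

/-- The class `C_{w,ℋ}`. -/
def aicClass (w : ℕ) (H : Set Multigraph) : Set Multigraph := {G | aic H G ≤ w}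

/-- `ℋ` is a `≤_i`-antichain. -/
def IsAntichainImm (H : Set Multigraph) : Prop :=
  ∀ G₁ ∈ H, ∀ G₂ ∈ H, Immersion G₁ G₂ → Isomorphic G₁ G₂

/-- Disjoint union of two multigraphs. -/
def disjUnion (G H : Multigraph) : Multigraph where
  V := G.V ⊕ H.V
  E := G.E ⊕ H.E
  finV := inferInstance
  finE := inferInstance
  ends := Sum.elim (fun e => (Sum.inl (G.ends e).1, Sum.inl (G.ends e).2))
                   (fun e => (Sum.inr (H.ends e).1, Sum.inr (H.ends e).2))
  loopless := by
    rintro (e | e)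
    · simpa using G.loopless e
    · simpa using H.loopless e

/-- Disjoint union of a finite family of multigraphs. -/
def sigmaUnion {m : ℕ} (Gs : Fin m → Multigraph) : Multigraph where
  V := Σ i, (Gs i).V
  E := Σ i, (Gs i).E
  finV := inferInstance
  finE := inferInstance
  ends e := (⟨e.1, ((Gs e.1).ends e.2).1⟩, ⟨e.1, ((Gs e.1).ends e.2).2⟩)
  loopless := by
    intro e h
    exact (Gs e.1).loopless e.2 (by simpa using h)

/-- `cw_σ(G,X) = δ_G(X) + cw_{σ_X}(G[X])`. -/
noncomputable def cwRel (G : Multigraph) (ρ : G.V → ℕ) (X : Set G.V) : ℕ :=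
  G.delta X + (G.induce X).cwOrd (fun v => ρ v.val)

/-- Membership in the family of prefixes relevant to `X`-linkedness: the complement
of `X` (the prefix right before `X` starts) and the prefixes ending inside `X`. -/
def IsXPrefix (G : Multigraph) (ρ : G.V → ℕ) (X : Set G.V) (P : Set G.V) : Prop :=
  P = Xᶜ ∨ ∃ v ∈ X, P = {z | ρ z ≤ ρ v}

/-- An `X`-linked ordering. -/
def XLinked (G : Multigraph) (ρ : G.V → ℕ) (X : Set G.V) : Prop :=
  (∀ u v : G.V, u ∉ X → v ∈ X → ρ u < ρ v) ∧
  ∀ P P' : Set G.V, G.IsXPrefix ρ X P → G.IsXPrefix ρ X P' → P ⊆ P' →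
    G.ConnectorBetween P P'ᶜ
      (sInf {w | ∃ Q : Set G.V, G.IsXPrefix ρ X Q ∧ P ⊆ Q ∧ Q ⊆ P' ∧ w = G.delta Q})

end Multigraph


section CW11Aux
open Multigraph

namespace CW11

/-! ### Pure arithmetic: swapping two adjacent segments of positions -/

/-- Swap the position segments `[l, mid)` and `[mid, rp)`. -/
def swapMap (l mid rp p : ℕ) : ℕ :=
  if l ≤ p ∧ p < mid then p + (rp - mid)
  else if mid ≤ p ∧ p < rp then p - (mid - l)
  else p

lemma swapMap_inj {l mid rp : ℕ} (h1 : l ≤ mid) (h2 : mid ≤ rp) :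
    Function.Injective (swapMap l mid rp) := by
  intro p q hpq
  unfold swapMap at hpq
  split_ifs at hpq <;> omega

lemma swapMap_le_iff_out {l mid rp p q : ℕ} (h1 : l ≤ mid) (h2 : mid ≤ rp)
    (hq : q < l ∨ rp ≤ q) : swapMap l mid rp p ≤ swapMap l mid rp q ↔ p ≤ q := by
  unfold swapMap
  split_ifs <;> omega

lemma swapMap_le_iff_seg2 {l mid rp p v : ℕ} (h1 : l < mid) (h2 : mid ≤ v) (h3 : v < rp) :
    swapMap l mid rp p ≤ swapMap l mid rp v ↔ (p < l ∨ (mid ≤ p ∧ p ≤ v)) := by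
  unfold swapMap
  split_ifs <;> omega

lemma swapMap_le_iff_seg1 {l mid rp p v : ℕ} (h1 : l ≤ v) (h2 : v < mid) (h3 : mid < rp) :
    swapMap l mid rp p ≤ swapMap l mid rp v ↔
      (p < l ∨ (mid ≤ p ∧ p < rp) ∨ (l ≤ p ∧ p ≤ v)) := by
  unfold swapMap
  split_ifs <;> omega

lemma swapMap_lt_rev {l mid rp p q : ℕ} (h1 : l ≤ mid) (h2 : mid ≤ rp)
    (h : swapMap l mid rp p < swapMap l mid rp q) :
    p < q ∨ (mid ≤ p ∧ p < rp ∧ l ≤ q ∧ q < mid) := by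
  unfold swapMap at h
  split_ifs at h <;> omega

/-! ### Splitting a cut according to a vertex set `A` -/

/-- Edges crossing `S` that have an endpoint in `A`. -/
noncomputable def xp (G : Multigraph) (A S : Set G.V) : ℕ :=
  {e : G.E | ¬ ((G.ends e).1 ∈ S ↔ (G.ends e).2 ∈ S) ∧
    ((G.ends e).1 ∈ A ∨ (G.ends e).2 ∈ A)}.ncard

/-- Edges crossing `S` with no endpoint in `A`. -/
noncomputable def yp (G : Multigraph) (A S : Set G.V) : ℕ :=
  {e : G.E | ¬ ((G.ends e).1 ∈ S ↔ (G.ends e).2 ∈ S) ∧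
    ¬ ((G.ends e).1 ∈ A ∨ (G.ends e).2 ∈ A)}.ncard

lemma delta_xy (G : Multigraph) (A S : Set G.V) : G.delta S = xp G A S + yp G A S := by
  unfold Multigraph.delta xp yp
  rw [← Set.ncard_union_eq ?_ (Set.toFinite _) (Set.toFinite _)]
  · congr 1
    ext e
    simp only [Set.mem_setOf_eq, Set.mem_union]
    tauto
  · rw [Set.disjoint_left]
    intro e he1 he2
    exact he2.2 he1.2

lemma xp_le_delta (G : Multigraph) (A S : Set G.V) : xp G A S ≤ G.delta S := by
  rw [delta_xy G A S]; exact Nat.le_add_right _ _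

lemma yp_union (G : Multigraph) (A S W : Set G.V) (hW : W ⊆ A) :
    yp G A (S ∪ W) = yp G A S := by
  unfold yp
  congr 1
  ext e
  have hW1 : (G.ends e).1 ∈ W → (G.ends e).1 ∈ A := fun h => hW h
  have hW2 : (G.ends e).2 ∈ W → (G.ends e).2 ∈ A := fun h => hW h
  simp only [Set.mem_setOf_eq, Set.mem_union]
  tauto

lemma xp_union (G : Multigraph) (A S W : Set G.V)
    (hT : ∀ e : G.E, ((G.ends e).1 ∈ A ∨ (G.ends e).2 ∈ A) →
      (G.ends e).1 ∉ W ∧ (G.ends e).2 ∉ W) :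
    xp G A (S ∪ W) = xp G A S := by
  unfold xp
  congr 1
  ext e
  have := hT e
  simp only [Set.mem_setOf_eq, Set.mem_union]
  tauto

/-! ### Basic facts about `cwOrd` and `cutwidth` -/

lemma delta_le_cwOrd (G : Multigraph) (ρ : G.V → ℕ) (v : G.V) :
    G.delta {u | ρ u ≤ ρ v} ≤ G.cwOrd ρ := by
  have hset : {w | ∃ v : G.V, w = G.delta {u | ρ u ≤ ρ v}}
      = Set.range (fun v : G.V => G.delta {u | ρ u ≤ ρ v}) := by
    ext w
    simp only [Set.mem_setOf_eq, Set.mem_range]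
    exact ⟨fun ⟨v, h⟩ => ⟨v, h.symm⟩, fun ⟨v, h⟩ => ⟨v, h.symm⟩⟩
  refine le_csSup ?_ ⟨v, rfl⟩
  rw [hset]
  exact (Set.finite_range _).bddAbove

lemma cwOrd_le_of (G : Multigraph) (ρ : G.V → ℕ) (k : ℕ)
    (h : ∀ v : G.V, G.delta {u | ρ u ≤ ρ v} ≤ k) : G.cwOrd ρ ≤ k := by
  refine csSup_le' ?_
  rintro w ⟨v, rfl⟩
  exact h v

lemma cutwidth_le_cwOrd (G : Multigraph) (ρ : G.V → ℕ) (h : Function.Injective ρ) :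
    G.cutwidth ≤ G.cwOrd ρ :=
  Nat.sInf_le ⟨ρ, h, rfl⟩

/-! ### The potential function -/

noncomputable def PhiL (G : Multigraph) (τ : G.V → ℕ) : ℕ :=
  haveI : Fintype G.V := Fintype.ofFinite _
  ∑ v : G.V, G.delta {u | τ u ≤ τ v}

noncomputable def PhiI (G : Multigraph) (σ τ : G.V → ℕ) : ℕ :=
  {p : G.V × G.V | σ p.1 < σ p.2 ∧ τ p.2 < τ p.1}.ncard

noncomputable def KK (G : Multigraph) : ℕ := Nat.card G.V * Nat.card G.V + 1

noncomputable def Phi (G : Multigraph) (σ τ : G.V → ℕ) : ℕ :=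
  KK G * PhiL G τ + PhiI G σ τ

lemma PhiI_lt_KK (G : Multigraph) (σ τ : G.V → ℕ) : PhiI G σ τ < KK G := by
  have h1 : PhiI G σ τ ≤ Nat.card (G.V × G.V) := by
    rw [← Set.ncard_univ]
    exact Set.ncard_le_ncard (Set.subset_univ _) Set.finite_univ
  rw [Nat.card_prod] at h1
  unfold KK
  omega

lemma phi_lt_of_PhiL_lt {G : Multigraph} {σ τ τ' : G.V → ℕ}
    (h : PhiL G τ' < PhiL G τ) : Phi G σ τ' < Phi G σ τ := by
  have h1 : PhiI G σ τ' < KK G := PhiI_lt_KK G σ τ'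
  have h2 : KK G * PhiL G τ' + KK G ≤ KK G * PhiL G τ := by
    rw [← Nat.mul_succ]
    exact Nat.mul_le_mul_left _ h
  unfold Phi
  omega

lemma phi_lt_of_PhiI_lt {G : Multigraph} {σ τ τ' : G.V → ℕ}
    (hL : PhiL G τ' ≤ PhiL G τ) (hI : PhiI G σ τ' < PhiI G σ τ) :
    Phi G σ τ' < Phi G σ τ := by
  have h2 : KK G * PhiL G τ' ≤ KK G * PhiL G τ := Nat.mul_le_mul_left _ hL
  unfold Phi
  omega

/-! ### Rank normalization -/

noncomputable def rk (G : Multigraph) (τ : G.V → ℕ) (v : G.V) : ℕ :=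
  {u | τ u < τ v}.ncard

lemma rk_le_iff {G : Multigraph} {τ : G.V → ℕ} (hinj : Function.Injective τ) (u v : G.V) :
    rk G τ u ≤ rk G τ v ↔ τ u ≤ τ v := by
  constructor
  · intro h
    by_contra hc
    push_neg at hc
    have hsub : {w | τ w < τ v} ⊂ {w | τ w < τ u} := by
      constructor
      · intro w hw
        exact lt_trans hw hc
      · intro hsub2
        exact absurd (hsub2 hc) (lt_irrefl (τ v))
    have := Set.ncard_lt_ncard hsub (Set.toFinite _)
    unfold rk at h
    omega
  · intro h
    exact Set.ncard_le_ncard (fun w hw => lt_of_lt_of_le hw h) (Set.toFinite _)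

lemma rk_lt_iff {G : Multigraph} {τ : G.V → ℕ} (hinj : Function.Injective τ) (u v : G.V) :
    rk G τ u < rk G τ v ↔ τ u < τ v := by
  rw [← not_le, ← not_le, rk_le_iff hinj v u]

lemma rk_inj {G : Multigraph} {τ : G.V → ℕ} (hinj : Function.Injective τ) :
    Function.Injective (rk G τ) := by
  intro u v h
  apply hinj
  have h1 := (rk_le_iff hinj u v).mp (le_of_eq h)
  have h2 := (rk_le_iff hinj v u).mp (le_of_eq h.symm)
  omega

lemma rk_lt_card {G : Multigraph} {τ : G.V → ℕ} (v : G.V) :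
    rk G τ v < Nat.card G.V := by
  rw [← Set.ncard_univ]
  apply Set.ncard_lt_ncard ?_ Set.finite_univ
  constructor
  · exact Set.subset_univ _
  · intro hsub
    exact absurd (hsub (Set.mem_univ v)) (lt_irrefl (τ v))

lemma rk_surj {G : Multigraph} {τ : G.V → ℕ} (hinj : Function.Injective τ) :
    ∀ i < Nat.card G.V, ∃ v, rk G τ v = i := by
  haveI : Fintype G.V := Fintype.ofFinite _
  intro i hi
  have hicard : i < Fintype.card G.V := by rwa [← Nat.card_eq_fintype_card]
  set f : G.V → Fin (Fintype.card G.V) :=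
    fun v => ⟨rk G τ v, by
      have := rk_lt_card (G := G) (τ := τ) v
      rwa [Nat.card_eq_fintype_card] at this⟩ with hf
  have hfinj : Function.Injective f := by
    intro u v huv
    exact rk_inj hinj (congrArg Fin.val huv)
  have hbij : Function.Bijective f :=
    (Fintype.bijective_iff_injective_and_card f).mpr ⟨hfinj, by simp⟩
  obtain ⟨v, hv⟩ := hbij.2 ⟨i, hicard⟩
  exact ⟨v, congrArg Fin.val hv⟩

/-! ### Order-isomorphic rankings give the same data -/

lemma prefix_eq_of_ordiff {G : Multigraph} {τ τ' : G.V → ℕ}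
    (h : ∀ u v, τ u ≤ τ v ↔ τ' u ≤ τ' v) (v : G.V) :
    {u | τ u ≤ τ v} = {u | τ' u ≤ τ' v} :=
  Set.ext fun u => h u v

lemma cwOrd_congr {G : Multigraph} {τ τ' : G.V → ℕ}
    (h : ∀ u v, τ u ≤ τ v ↔ τ' u ≤ τ' v) : G.cwOrd τ = G.cwOrd τ' := by
  unfold Multigraph.cwOrd
  congr 1
  ext w
  constructor
  · rintro ⟨v, rfl⟩
    exact ⟨v, by rw [prefix_eq_of_ordiff h v]⟩
  · rintro ⟨v, rfl⟩
    exact ⟨v, by rw [prefix_eq_of_ordiff h v]⟩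

lemma PhiL_congr {G : Multigraph} {τ τ' : G.V → ℕ}
    (h : ∀ u v, τ u ≤ τ v ↔ τ' u ≤ τ' v) : PhiL G τ = PhiL G τ' := by
  unfold PhiL
  exact Finset.sum_congr rfl fun v _ => by rw [prefix_eq_of_ordiff h v]

lemma PhiI_congr {G : Multigraph} {σ τ τ' : G.V → ℕ}
    (h : ∀ u v, τ u ≤ τ v ↔ τ' u ≤ τ' v) : PhiI G σ τ = PhiI G σ τ' := by
  unfold PhiI
  congr 1
  ext p
  simp only [Set.mem_setOf_eq]
  have : τ p.2 < τ p.1 ↔ τ' p.2 < τ' p.1 := by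
    rw [← not_le, ← not_le, not_iff_not]
    exact h p.1 p.2
  tauto

lemma Phi_congr {G : Multigraph} {σ τ τ' : G.V → ℕ}
    (h : ∀ u v, τ u ≤ τ v ↔ τ' u ≤ τ' v) : Phi G σ τ = Phi G σ τ' := by
  unfold Phi
  rw [PhiL_congr h, PhiI_congr (σ := σ) h]


/-! ### The valley lemma and block counting over runs -/

lemma valley (c k : ℕ) (X : ℕ → ℕ)
    (h : ∀ s, 1 ≤ s → s < k → X (s - 1) ≤ X s → X s < X (s + 1))
    (hb : ∀ s ≤ k, X s ≤ c) : k ≤ 2 * c + 1 := by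
  classical
  rcases Nat.eq_zero_or_pos k with hk | hk
  · omega
  by_cases hS : ∃ s, 1 ≤ s ∧ s < k ∧ X (s - 1) ≤ X s
  · obtain ⟨hj1, hjk, hjle⟩ := Nat.find_spec hS
    set j := Nat.find hS with hj
    -- descent before j
    have desc : ∀ s, s < j → X s + s ≤ X 0 := by
      intro s
      induction s with
      | zero => intro _; omega
      | succ s ih =>
        intro hs
        have hns : ¬ (1 ≤ s + 1 ∧ s + 1 < k ∧ X (s + 1 - 1) ≤ X (s + 1)) :=
          Nat.find_min hS (by omega)
        have h1 : s + 1 < k := by omega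
        have h2 : X (s + 1) < X s := by
          by_contra hc
          push_neg at hc
          exact hns ⟨by omega, h1, by simpa using hc⟩
        have := ih (by omega)
        omega
    have hjc : j - 1 ≤ c := by
      have := desc (j - 1) (by omega)
      have := hb 0 (by omega)
      omega
    -- ascent after j
    have asc : ∀ dlt, j + dlt < k → X (j + dlt) < X (j + dlt + 1) := by
      intro dlt
      induction dlt with
      | zero =>
        intro hd
        simpa using h j hj1 (by omega) hjle
      | succ dlt ih =>
        intro hd
        have heq : j + (dlt + 1) = j + dlt + 1 := by omega
        rw [heq]
        have hprev := ih (by omega)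
        exact h (j + dlt + 1) (by omega) (by omega)
          (by
            have h9 : j + dlt + 1 - 1 = j + dlt := by omega
            rw [h9]
            exact le_of_lt hprev)
    have grow : ∀ dlt, j + dlt ≤ k → X j + dlt ≤ X (j + dlt) := by
      intro dlt
      induction dlt with
      | zero => intro _; simp
      | succ dlt ih =>
        intro hd
        have heq : j + (dlt + 1) = j + dlt + 1 := by omega
        rw [heq]
        have h1 := ih (by omega)
        have h2 := asc dlt (by omega)
        omega
    have := grow (k - j) (by omega)
    have hXk := hb (j + (k - j)) (by omega)
    have hXj0 : 0 ≤ X j := Nat.zero_le _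
    omega
  · push_neg at hS
    have desc : ∀ s, s < k → X s + s ≤ X 0 := by
      intro s
      induction s with
      | zero => intro _; omega
      | succ s ih =>
        intro hs
        have h2 : X (s + 1) < X s := by
          by_contra hc
          push_neg at hc
          have := hS (s + 1) (by omega) hs
          simp only [Nat.add_sub_cancel] at this
          omega
        have := ih (by omega)
        omega
    have := desc (k - 1) (by omega)
    have := hb 0 (by omega)
    omega

lemma runBound (m c : ℕ) (f g : ℕ → ℕ) (U : ℕ → Prop) (l : ℕ)
    (h1 : ∀ t, t + 1 < m → U t → g t ≤ f t → f t < f (t + 1))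
    (h2 : ∀ t, t + 1 < m → U t → g (t + 1) = f t)
    (h3 : ∀ t < m, f t ≤ c) (h3' : ∀ t < m, g t ≤ c)
    (hU : ∀ t, l ≤ t → t + 1 < m → U t) : m ≤ l + 2 * c + 2 := by
  classical
  rcases le_or_gt m (l + 1) with hm | hm
  · omega
  set X : ℕ → ℕ := fun s => if s = 0 then g l else f (l + s - 1) with hX
  set k := m - 1 - l with hk
  have hval : k ≤ 2 * c + 1 := by
    apply valley c k X
    · intro s hs1 hsk hle
      set t := l + s - 1 with ht
      have htl : l ≤ t := by omega
      have htm : t + 1 < m := by omega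
      have hUt : U t := hU t htl htm
      have hgf : g t ≤ f t := by
        rcases Nat.eq_or_lt_of_le hs1 with hs | hs
        · -- s = 1, t = l
          have hs' : s = 1 := hs.symm
          have htt : t = l := by omega
          have hX0 : X 0 = g l := by simp [hX]
          have hXs : X s = f t := by
            simp only [hX, ht]
            rw [if_neg (by omega)]
          rw [htt]
          have : X (s - 1) = X 0 := by rw [hs']
          rw [this, hX0, hXs, htt] at hle
          exact hle
        · -- s ≥ 2
          have hXs1 : X (s - 1) = f (t - 1) := by
            simp only [hX]
            rw [if_neg (by omega)]
            congr 1
            omega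
          have hXs : X s = f t := by
            simp only [hX]
            rw [if_neg (by omega)]
          have hg : g t = f (t - 1) := by
            have := h2 (t - 1) (by omega) (hU (t - 1) (by omega) (by omega))
            have htt : t - 1 + 1 = t := by omega
            rw [htt] at this
            exact this
          rw [hXs1, hXs] at hle
          rw [hg]
          exact hle
      have hres := h1 t htm hUt hgf
      have hXs : X s = f t := by
        simp only [hX]
        rw [if_neg (by omega)]
      have hXs1 : X (s + 1) = f (t + 1) := by
        simp only [hX]
        rw [if_neg (by omega)]
        congr 1
        omega
      rw [hXs, hXs1]
      exact hres
    · intro s hs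
      rcases Nat.eq_zero_or_pos s with h0 | h0
      · subst h0
        simp only [hX, if_pos rfl]
        exact h3' l (by omega)
      · simp only [hX]
        rw [if_neg (by omega)]
        exact h3 (l + s - 1) (by omega)
  omega

lemma chainCount (c : ℕ) : ∀ (r m : ℕ) (f g : ℕ → ℕ) (U : ℕ → Prop),
    (∀ t, t + 1 < m → U t → g t ≤ f t → f t < f (t + 1)) →
    (∀ t, t + 1 < m → U t → g (t + 1) = f t) →
    (∀ t < m, f t ≤ c) → (∀ t < m, g t ≤ c) →
    ({t | t + 1 < m ∧ ¬ U t}.ncard ≤ r) →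
    m ≤ (r + 1) * (2 * c + 2) := by
  intro r
  induction r with
  | zero =>
    intro m f g U h1 h2 h3 h3' h4
    have hfin : {t | t + 1 < m ∧ ¬ U t}.Finite :=
      (Set.finite_Iio m).subset (fun x hx => Set.mem_Iio.mpr (by have := hx.1; omega))
    have hallU : ∀ t, 0 ≤ t → t + 1 < m → U t := by
      intro t _ htm
      by_contra hUt
      have := (Set.ncard_pos hfin).mpr ⟨t, ⟨htm, hUt⟩⟩
      omega
    have := runBound m c f g U 0 h1 h2 h3 h3' hallU
    omega
  | succ r ih =>
    intro m f g U h1 h2 h3 h3' h4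
    set T := {t | t + 1 < m ∧ ¬ U t} with hT
    have hfin : T.Finite :=
      (Set.finite_Iio m).subset (fun x hx => Set.mem_Iio.mpr (by have := hx.1; omega))
    rcases Set.eq_empty_or_nonempty T with hTe | hTne
    · have hallU : ∀ t, 0 ≤ t → t + 1 < m → U t := by
        intro t _ htm
        by_contra hUt
        have : t ∈ T := ⟨htm, hUt⟩
        rw [hTe] at this
        exact this
      have := runBound m c f g U 0 h1 h2 h3 h3' hallU
      have h9 := Nat.le_mul_of_pos_left (n := r + 1 + 1) (2 * c + 2) (by omega)
      omega
    · set ts := sSup T with hts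
      have htsmem : ts ∈ T := Nat.sSup_mem hTne (hfin.bddAbove)
      have htsmax : ∀ t ∈ T, t ≤ ts := fun t ht => le_csSup hfin.bddAbove ht
      have htsm : ts + 1 < m := htsmem.1
      have hUabove : ∀ t, ts + 1 ≤ t → t + 1 < m → U t := by
        intro t ht1 htm
        by_contra hUt
        have := htsmax t ⟨htm, hUt⟩
        omega
      have hrun := runBound m c f g U (ts + 1) h1 h2 h3 h3' hUabove
      -- recursive bound on prefix of length ts+1
      have hsubT : {t | t + 1 < ts + 1 ∧ ¬ U t} ⊆ T \ {ts} := by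
        rintro t ⟨ht1, ht2⟩
        refine ⟨⟨by omega, ht2⟩, ?_⟩
        simp only [Set.mem_singleton_iff]
        omega
      have hcard : {t | t + 1 < ts + 1 ∧ ¬ U t}.ncard ≤ r := by
        have h5 : (T \ {ts}).ncard = T.ncard - 1 := by
          rw [Set.ncard_diff_singleton_of_mem htsmem]
        have h6 : {t | t + 1 < ts + 1 ∧ ¬ U t}.ncard ≤ (T \ {ts}).ncard :=
          Set.ncard_le_ncard hsubT (hfin.subset Set.diff_subset)
        have h7 : 1 ≤ T.ncard := (Set.ncard_pos hfin).mpr hTne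
        omega
      have hpre := ih (ts + 1) f g U
        (fun t htm hUt => h1 t (by omega) hUt)
        (fun t htm hUt => h2 t (by omega) hUt)
        (fun t htm => h3 t (by omega))
        (fun t htm => h3' t (by omega))
        hcard
      calc m ≤ ts + 1 + 2 * c + 2 := hrun
        _ ≤ (r + 1) * (2 * c + 2) + (2 * c + 2) := by omega
        _ = (r + 1 + 1) * (2 * c + 2) := by ring


/-! ### The core exchange argument -/

set_option maxHeartbeats 1000000 in
lemma step_core (G : Multigraph) (σ : G.V → ℕ) (v₀ : G.V) (τ : G.V → ℕ)
    (hinj : Function.Injective τ)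
    (hsurj : ∀ i < Nat.card G.V, ∃ v, τ v = i)
    (hcw : G.cwOrd τ ≤ G.cutwidth)
    (hmin : ∀ τ' : G.V → ℕ, Function.Injective τ' → G.cwOrd τ' ≤ G.cutwidth →
      Phi G σ τ ≤ Phi G σ τ')
    (bpos l mid rp : ℕ)
    (hbl : bpos < l) (hlm : l < mid) (hmr : mid < rp) (hrn : rp ≤ Nat.card G.V)
    (hB1 : ∀ u, bpos ≤ τ u → τ u < l → σ u ≤ σ v₀)
    (hGp : ∀ u, l ≤ τ u → τ u < mid → ¬ σ u ≤ σ v₀)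
    (hB2 : ∀ u, mid ≤ τ u → τ u < rp → σ u ≤ σ v₀)
    (hUt : ∀ e : G.E,
      ¬ ((l ≤ τ (G.ends e).1 ∧ τ (G.ends e).1 < mid ∧ σ (G.ends e).2 ≤ σ v₀) ∨
         (l ≤ τ (G.ends e).2 ∧ τ (G.ends e).2 < mid ∧ σ (G.ends e).1 ≤ σ v₀)))
    (hstart : xp G {u | σ u ≤ σ v₀} {u | τ u < bpos} ≤ xp G {u | σ u ≤ σ v₀} {u | τ u < l}) :
    xp G {u | σ u ≤ σ v₀} {u | τ u < l} < xp G {u | σ u ≤ σ v₀} {u | τ u < rp} := by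
  classical
  letI : Fintype G.V := Fintype.ofFinite _
  set A : Set G.V := {u | σ u ≤ σ v₀} with hA
  have hT : ∀ (W : Set G.V), (∀ u ∈ W, l ≤ τ u ∧ τ u < mid) → ∀ e : G.E,
      ((G.ends e).1 ∈ A ∨ (G.ends e).2 ∈ A) →
      (G.ends e).1 ∉ W ∧ (G.ends e).2 ∉ W := by
    intro W hW e he
    constructor
    · intro h1
      obtain ⟨ha, hb⟩ := hW _ h1
      rcases he with he | he
      · exact hGp _ ha hb he
      · exact hUt e (Or.inl ⟨ha, hb, he⟩)
    · intro h1
      obtain ⟨ha, hb⟩ := hW _ h1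
      rcases he with he | he
      · exact hUt e (Or.inr ⟨ha, hb, he⟩)
      · exact hGp _ ha hb he
  have holdb : ∀ v : G.V, G.delta {u | τ u ≤ τ v} ≤ G.cutwidth :=
    fun v => le_trans (delta_le_cwOrd G τ v) hcw
  obtain ⟨wb, hwb⟩ := hsurj bpos (by omega)
  obtain ⟨wl, hwl⟩ := hsurj l (by omega)
  obtain ⟨wm, hwm⟩ := hsurj mid (by omega)
  -- step 1 : the `yp`-value may not drop across the gap
  have hyStep : yp G A {u | τ u < l} ≤ yp G A {u | τ u < mid} := by
    by_contra hcon
    push_neg at hcon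
    set τ₂ : G.V → ℕ := fun u => swapMap bpos l mid (τ u) with hτ₂
    have hinj₂ : Function.Injective τ₂ :=
      fun u v h => hinj (swapMap_inj (by omega) (by omega) h)
    have hyl : yp G A {u | τ u < l} = yp G A {u | τ u < bpos} := by
      have hset : {u : G.V | τ u < l} = {u | τ u < bpos} ∪ {u | bpos ≤ τ u ∧ τ u < l} := by
        ext u; simp only [Set.mem_setOf_eq, Set.mem_union]; omega
      rw [hset, yp_union G A _ _ (fun u hu => hB1 u hu.1 hu.2)]
    have hym : yp G A {u | τ u < mid}
        = yp G A ({u | τ u < bpos} ∪ {u | l ≤ τ u ∧ τ u < mid}) := by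
      have hset : {u : G.V | τ u < mid}
          = ({u | τ u < bpos} ∪ {u | l ≤ τ u ∧ τ u < mid}) ∪ {u | bpos ≤ τ u ∧ τ u < l} := by
        ext u; simp only [Set.mem_setOf_eq, Set.mem_union]; omega
      rw [hset, yp_union G A _ _ (fun u hu => hB1 u hu.1 hu.2)]
    have hout : ∀ v : G.V, (τ v < bpos ∨ mid ≤ τ v) →
        G.delta {u | τ₂ u ≤ τ₂ v} = G.delta {u | τ u ≤ τ v} := by
      intro v hv
      have hset : {u | τ₂ u ≤ τ₂ v} = {u | τ u ≤ τ v} := by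
        ext u
        simp only [hτ₂, Set.mem_setOf_eq]
        exact swapMap_le_iff_out (by omega) (by omega) hv
      rw [hset]
    have hbt : ∀ v : G.V, bpos ≤ τ v → τ v < l →
        G.delta {u | τ₂ u ≤ τ₂ v} < G.delta {u | τ u ≤ τ v} := by
      intro v hv1 hv2
      have hnew : {u | τ₂ u ≤ τ₂ v}
          = ({u | τ u < bpos} ∪ {u | bpos ≤ τ u ∧ τ u ≤ τ v}) ∪ {u | l ≤ τ u ∧ τ u < mid} := by
        ext u
        simp only [hτ₂, Set.mem_setOf_eq, Set.mem_union]
        rw [swapMap_le_iff_seg1 hv1 hv2 hlm]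
        omega
      have hold : {u | τ u ≤ τ v} = {u | τ u < bpos} ∪ {u | bpos ≤ τ u ∧ τ u ≤ τ v} := by
        ext u; simp only [Set.mem_setOf_eq, Set.mem_union]; omega
      have e1 : G.delta (({u | τ u < bpos} ∪ {u | bpos ≤ τ u ∧ τ u ≤ τ v})
            ∪ {u | l ≤ τ u ∧ τ u < mid})
          = xp G A ({u | τ u < bpos} ∪ {u | bpos ≤ τ u ∧ τ u ≤ τ v})
            + yp G A (({u | τ u < bpos} ∪ {u | bpos ≤ τ u ∧ τ u ≤ τ v})
              ∪ {u | l ≤ τ u ∧ τ u < mid}) := by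
        rw [delta_xy G A, xp_union G A _ _ (hT _ (fun u hu => ⟨hu.1, hu.2⟩))]
      have e2 : yp G A (({u | τ u < bpos} ∪ {u | bpos ≤ τ u ∧ τ u ≤ τ v})
            ∪ {u | l ≤ τ u ∧ τ u < mid})
          = yp G A ({u | τ u < bpos} ∪ {u | l ≤ τ u ∧ τ u < mid}) := by
        have hset : (({u : G.V | τ u < bpos} ∪ {u | bpos ≤ τ u ∧ τ u ≤ τ v})
              ∪ {u | l ≤ τ u ∧ τ u < mid})
            = ({u | τ u < bpos} ∪ {u | l ≤ τ u ∧ τ u < mid})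
              ∪ {u | bpos ≤ τ u ∧ τ u ≤ τ v} := by
          ext u; simp only [Set.mem_setOf_eq, Set.mem_union]; tauto
        rw [hset, yp_union G A _ _ (fun u hu => hB1 u hu.1 (by have := hu.2; omega))]
      have e3 : G.delta ({u | τ u < bpos} ∪ {u | bpos ≤ τ u ∧ τ u ≤ τ v})
          = xp G A ({u | τ u < bpos} ∪ {u | bpos ≤ τ u ∧ τ u ≤ τ v})
            + yp G A {u | τ u < bpos} := by
        rw [delta_xy G A, yp_union G A _ _ (fun u hu => hB1 u hu.1 (by have := hu.2; omega))]
      rw [hnew, hold, e1, e2, e3]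
      have hlt : yp G A ({u | τ u < bpos} ∪ {u | l ≤ τ u ∧ τ u < mid})
          < yp G A {u | τ u < bpos} := by
        rw [← hym, ← hyl]; exact hcon
      omega
    have hgp : ∀ v : G.V, l ≤ τ v → τ v < mid →
        G.delta {u | τ₂ u ≤ τ₂ v} ≤ G.delta {u | τ u ≤ τ v} := by
      intro v hv1 hv2
      have hnew : {u | τ₂ u ≤ τ₂ v} = {u | τ u < bpos} ∪ {u | l ≤ τ u ∧ τ u ≤ τ v} := by
        ext u
        simp only [hτ₂, Set.mem_setOf_eq, Set.mem_union]
        rw [swapMap_le_iff_seg2 hbl hv1 hv2]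
      have hold : {u | τ u ≤ τ v}
          = ({u | τ u < bpos} ∪ {u | bpos ≤ τ u ∧ τ u < l}) ∪ {u | l ≤ τ u ∧ τ u ≤ τ v} := by
        ext u; simp only [Set.mem_setOf_eq, Set.mem_union]; omega
      have e1 : G.delta ({u | τ u < bpos} ∪ {u | l ≤ τ u ∧ τ u ≤ τ v})
          = xp G A {u | τ u < bpos}
            + yp G A ({u | τ u < bpos} ∪ {u | l ≤ τ u ∧ τ u ≤ τ v}) := by
        rw [delta_xy G A, xp_union G A _ _ (hT _ (fun u hu => ⟨hu.1, by have := hu.2; omega⟩))]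
      have e2 : G.delta (({u | τ u < bpos} ∪ {u | bpos ≤ τ u ∧ τ u < l})
            ∪ {u | l ≤ τ u ∧ τ u ≤ τ v})
          = xp G A ({u | τ u < bpos} ∪ {u | bpos ≤ τ u ∧ τ u < l})
            + yp G A ({u | τ u < bpos} ∪ {u | l ≤ τ u ∧ τ u ≤ τ v}) := by
        rw [delta_xy G A, xp_union G A _ _ (hT _ (fun u hu => ⟨hu.1, by have := hu.2; omega⟩))]
        have hset : (({u : G.V | τ u < bpos} ∪ {u | bpos ≤ τ u ∧ τ u < l})
              ∪ {u | l ≤ τ u ∧ τ u ≤ τ v})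
            = ({u | τ u < bpos} ∪ {u | l ≤ τ u ∧ τ u ≤ τ v})
              ∪ {u | bpos ≤ τ u ∧ τ u < l} := by
          ext u; simp only [Set.mem_setOf_eq, Set.mem_union]; tauto
        rw [hset, yp_union G A _ _ (fun u hu => hB1 u hu.1 hu.2)]
      have e3 : xp G A ({u | τ u < bpos} ∪ {u | bpos ≤ τ u ∧ τ u < l})
          = xp G A {u | τ u < l} := by
        have hset : ({u : G.V | τ u < bpos} ∪ {u | bpos ≤ τ u ∧ τ u < l})
            = {u : G.V | τ u < l} := by
          ext u; simp only [Set.mem_setOf_eq, Set.mem_union]; omega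
        rw [hset]
      rw [hnew, hold, e1, e2, e3]
      omega
    have hpt : ∀ v : G.V, G.delta {u | τ₂ u ≤ τ₂ v} ≤ G.delta {u | τ u ≤ τ v} := by
      intro v
      rcases lt_or_ge (τ v) bpos with hv | hv
      · exact le_of_eq (hout v (Or.inl hv))
      rcases lt_or_ge (τ v) l with hv2 | hv2
      · exact le_of_lt (hbt v hv hv2)
      rcases lt_or_ge (τ v) mid with hv3 | hv3
      · exact hgp v hv2 hv3
      · exact le_of_eq (hout v (Or.inr hv3))
    have hcw₂ : G.cwOrd τ₂ ≤ G.cutwidth :=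
      cwOrd_le_of G τ₂ _ (fun v => le_trans (hpt v) (holdb v))
    have hPhiL : PhiL G τ₂ < PhiL G τ := by
      unfold PhiL
      refine Finset.sum_lt_sum (fun v _ => hpt v) ⟨wb, Finset.mem_univ _, ?_⟩
      exact hbt wb (le_of_eq hwb.symm) (by omega)
    have hlt : Phi G σ τ₂ < Phi G σ τ := phi_lt_of_PhiL_lt hPhiL
    have := hmin τ₂ hinj₂ hcw₂
    omega
  -- step 2 : conclude that the `xp`-value strictly increases
  by_contra hxcon
  push_neg at hxcon
  set τ₃ : G.V → ℕ := fun u => swapMap l mid rp (τ u) with hτ₃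
  have hinj₃ : Function.Injective τ₃ :=
    fun u v h => hinj (swapMap_inj (by omega) (by omega) h)
  have hyleq : yp G A {u | τ u < mid}
      = yp G A ({u | τ u < l} ∪ {u | l ≤ τ u ∧ τ u < mid}) := by
    have hset : {u : G.V | τ u < mid} = {u | τ u < l} ∪ {u | l ≤ τ u ∧ τ u < mid} := by
      ext u; simp only [Set.mem_setOf_eq, Set.mem_union]; omega
    rw [hset]
  have hxrp : xp G A {u | τ u < rp}
      = xp G A ({u | τ u < l} ∪ {u | mid ≤ τ u ∧ τ u < rp}) := by
    have hset : {u : G.V | τ u < rp}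
        = ({u | τ u < l} ∪ {u | mid ≤ τ u ∧ τ u < rp}) ∪ {u | l ≤ τ u ∧ τ u < mid} := by
      ext u; simp only [Set.mem_setOf_eq, Set.mem_union]; omega
    rw [hset, xp_union G A _ _ (hT _ (fun u hu => ⟨hu.1, hu.2⟩))]
  have hout : ∀ v : G.V, (τ v < l ∨ rp ≤ τ v) →
      G.delta {u | τ₃ u ≤ τ₃ v} = G.delta {u | τ u ≤ τ v} := by
    intro v hv
    have hset : {u | τ₃ u ≤ τ₃ v} = {u | τ u ≤ τ v} := by
      ext u
      simp only [hτ₃, Set.mem_setOf_eq]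
      exact swapMap_le_iff_out (by omega) (by omega) hv
    rw [hset]
  have hb2 : ∀ v : G.V, mid ≤ τ v → τ v < rp →
      G.delta {u | τ₃ u ≤ τ₃ v} ≤ G.delta {u | τ u ≤ τ v} := by
    intro v hv1 hv2
    have hnew : {u | τ₃ u ≤ τ₃ v} = {u | τ u < l} ∪ {u | mid ≤ τ u ∧ τ u ≤ τ v} := by
      ext u
      simp only [hτ₃, Set.mem_setOf_eq, Set.mem_union]
      rw [swapMap_le_iff_seg2 hlm hv1 hv2]
    have hold : {u | τ u ≤ τ v}
        = ({u | τ u < l} ∪ {u | mid ≤ τ u ∧ τ u ≤ τ v}) ∪ {u | l ≤ τ u ∧ τ u < mid} := by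
      ext u; simp only [Set.mem_setOf_eq, Set.mem_union]; omega
    have e1 : G.delta ({u | τ u < l} ∪ {u | mid ≤ τ u ∧ τ u ≤ τ v})
        = xp G A ({u | τ u < l} ∪ {u | mid ≤ τ u ∧ τ u ≤ τ v}) + yp G A {u | τ u < l} := by
      rw [delta_xy G A, yp_union G A _ _ (fun u hu => hB2 u hu.1 (by have := hu.2; omega))]
    have e2 : G.delta (({u | τ u < l} ∪ {u | mid ≤ τ u ∧ τ u ≤ τ v})
          ∪ {u | l ≤ τ u ∧ τ u < mid})
        = xp G A ({u | τ u < l} ∪ {u | mid ≤ τ u ∧ τ u ≤ τ v})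
          + yp G A {u | τ u < mid} := by
      rw [delta_xy G A, xp_union G A _ _ (hT _ (fun u hu => ⟨hu.1, hu.2⟩))]
      congr 1
      have hset : (({u : G.V | τ u < l} ∪ {u | mid ≤ τ u ∧ τ u ≤ τ v})
            ∪ {u | l ≤ τ u ∧ τ u < mid})
          = ({u | τ u < l} ∪ {u | l ≤ τ u ∧ τ u < mid}) ∪ {u | mid ≤ τ u ∧ τ u ≤ τ v} := by
        ext u; simp only [Set.mem_setOf_eq, Set.mem_union]; tauto
      rw [hset, yp_union G A _ _ (fun u hu => hB2 u hu.1 (by have := hu.2; omega)), hyleq]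
    rw [hnew, hold, e1, e2]
    omega
  have hgp3 : ∀ v : G.V, l ≤ τ v → τ v < mid →
      G.delta {u | τ₃ u ≤ τ₃ v} ≤ G.delta {u | τ u ≤ τ v} := by
    intro v hv1 hv2
    have hnew : {u | τ₃ u ≤ τ₃ v}
        = ({u | τ u < l} ∪ {u | mid ≤ τ u ∧ τ u < rp}) ∪ {u | l ≤ τ u ∧ τ u ≤ τ v} := by
      ext u
      simp only [hτ₃, Set.mem_setOf_eq, Set.mem_union]
      rw [swapMap_le_iff_seg1 hv1 hv2 hmr]
      tauto
    have hold : {u | τ u ≤ τ v} = {u | τ u < l} ∪ {u | l ≤ τ u ∧ τ u ≤ τ v} := by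
      ext u; simp only [Set.mem_setOf_eq, Set.mem_union]; omega
    have e1 : G.delta (({u | τ u < l} ∪ {u | mid ≤ τ u ∧ τ u < rp})
          ∪ {u | l ≤ τ u ∧ τ u ≤ τ v})
        = xp G A ({u | τ u < l} ∪ {u | mid ≤ τ u ∧ τ u < rp})
          + yp G A ({u | τ u < l} ∪ {u | l ≤ τ u ∧ τ u ≤ τ v}) := by
      rw [delta_xy G A, xp_union G A _ _ (hT _ (fun u hu => ⟨hu.1, by have := hu.2; omega⟩))]
      congr 1
      have hset : (({u : G.V | τ u < l} ∪ {u | mid ≤ τ u ∧ τ u < rp})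
            ∪ {u | l ≤ τ u ∧ τ u ≤ τ v})
          = ({u | τ u < l} ∪ {u | l ≤ τ u ∧ τ u ≤ τ v}) ∪ {u | mid ≤ τ u ∧ τ u < rp} := by
        ext u; simp only [Set.mem_setOf_eq, Set.mem_union]; tauto
      rw [hset, yp_union G A _ _ (fun u hu => hB2 u hu.1 hu.2)]
    have e2 : G.delta ({u | τ u < l} ∪ {u | l ≤ τ u ∧ τ u ≤ τ v})
        = xp G A {u | τ u < l} + yp G A ({u | τ u < l} ∪ {u | l ≤ τ u ∧ τ u ≤ τ v}) := by
      rw [delta_xy G A, xp_union G A _ _ (hT _ (fun u hu => ⟨hu.1, by have := hu.2; omega⟩))]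
    rw [hnew, hold, e1, e2, ← hxrp]
    omega
  have hpt : ∀ v : G.V, G.delta {u | τ₃ u ≤ τ₃ v} ≤ G.delta {u | τ u ≤ τ v} := by
    intro v
    rcases lt_or_ge (τ v) l with hv | hv
    · exact le_of_eq (hout v (Or.inl hv))
    rcases lt_or_ge (τ v) mid with hv2 | hv2
    · exact hgp3 v hv hv2
    rcases lt_or_ge (τ v) rp with hv3 | hv3
    · exact hb2 v hv2 hv3
    · exact le_of_eq (hout v (Or.inr hv3))
  have hcw₃ : G.cwOrd τ₃ ≤ G.cutwidth :=
    cwOrd_le_of G τ₃ _ (fun v => le_trans (hpt v) (holdb v))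
  have hPhiL : PhiL G τ₃ ≤ PhiL G τ := by
    unfold PhiL
    exact Finset.sum_le_sum (fun v _ => hpt v)
  have hIsub : {p : G.V × G.V | σ p.1 < σ p.2 ∧ τ₃ p.2 < τ₃ p.1}
      ⊆ {p : G.V × G.V | σ p.1 < σ p.2 ∧ τ p.2 < τ p.1} := by
    rintro p ⟨hs, ht⟩
    refine ⟨hs, ?_⟩
    simp only [hτ₃] at ht
    rcases swapMap_lt_rev (by omega) (by omega) ht with h | h
    · exact h
    · exfalso
      have h1 := hB2 p.2 h.1 h.2.1
      have h2 := hGp p.1 h.2.2.1 h.2.2.2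
      omega
  have hwit_in : ((wm, wl) : G.V × G.V)
      ∈ {p : G.V × G.V | σ p.1 < σ p.2 ∧ τ p.2 < τ p.1} := by
    have h1 := hB2 wm (le_of_eq hwm.symm) (by omega)
    have h2 := hGp wl (le_of_eq hwl.symm) (by omega)
    exact ⟨show σ wm < σ wl by omega, show τ wl < τ wm by omega⟩
  have hwit_out : ((wm, wl) : G.V × G.V)
      ∉ {p : G.V × G.V | σ p.1 < σ p.2 ∧ τ₃ p.2 < τ₃ p.1} := by
    rintro ⟨-, ht⟩
    have ht' : swapMap l mid rp (τ wl) < swapMap l mid rp (τ wm) := by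
      rw [hτ₃] at ht
      exact ht
    rw [hwl, hwm] at ht'
    have h1 : swapMap l mid rp l = l + (rp - mid) := by
      unfold swapMap; split_ifs <;> omega
    have h2 : swapMap l mid rp mid = mid - (mid - l) := by
      unfold swapMap; split_ifs <;> omega
    rw [h1, h2] at ht'
    omega
  have hPhiI : PhiI G σ τ₃ < PhiI G σ τ := by
    unfold PhiI
    refine Set.ncard_lt_ncard ?_ (Set.toFinite _)
    exact (Set.ssubset_iff_of_subset hIsub).mpr ⟨(wm, wl), hwit_in, hwit_out⟩
  have hlt : Phi G σ τ₃ < Phi G σ τ := phi_lt_of_PhiI_lt hPhiL hPhiI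
  have := hmin τ₃ hinj₃ hcw₃
  omega


/-! ### Counting the blocks of a prefix in a minimizing ordering -/

set_option maxHeartbeats 1000000 in
lemma blocks_bound (G : Multigraph) (σ : G.V → ℕ) (τ : G.V → ℕ)
    (hinj : Function.Injective τ) (hbnd : ∀ v, τ v < Nat.card G.V)
    (hsurj : ∀ i < Nat.card G.V, ∃ v, τ v = i)
    (hcw : G.cwOrd τ ≤ G.cutwidth)
    (hmin : ∀ τ' : G.V → ℕ, Function.Injective τ' → G.cwOrd τ' ≤ G.cutwidth →
      Phi G σ τ ≤ Phi G σ τ')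
    (v₀ : G.V) :
    G.blockCount τ {u | σ u ≤ σ v₀} ≤ (G.cwOrd σ + 1) * (2 * G.cutwidth + 2) := by
  classical
  haveI : Nonempty G.V := ⟨v₀⟩
  set n := Nat.card G.V with hn
  set A : Set G.V := {u | σ u ≤ σ v₀} with hA
  set e : ℕ → G.V := Function.invFun τ with he
  have hte : ∀ i, i < n → τ (e i) = i := by
    intro i hi
    exact Function.invFun_eq (hsurj i hi)
  have hev : ∀ v : G.V, e (τ v) = v := fun v => Function.leftInverse_invFun hinj v
  set Sf : Finset ℕ := (Finset.range n).filter (fun i => e i ∈ A ∧ (i = 0 ∨ e (i - 1) ∉ A))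
    with hSf
  set m := Sf.card with hm
  -- the block-start set in terms of positions
  have hmem : ∀ v : G.V,
      (v ∈ A ∧ ∀ u, τ u < τ v → ∃ w, w ∉ A ∧ τ u ≤ τ w ∧ τ w < τ v) ↔ τ v ∈ Sf := by
    intro v
    simp only [hSf, Finset.mem_filter, Finset.mem_range]
    constructor
    · rintro ⟨hvA, hblk⟩
      refine ⟨hbnd v, by rw [hev v]; exact hvA, ?_⟩
      rcases Nat.eq_zero_or_pos (τ v) with h0 | h0
      · exact Or.inl h0
      · refine Or.inr ?_
        have hte1 : τ (e (τ v - 1)) = τ v - 1 := hte _ (by have := hbnd v; omega)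
        obtain ⟨w, hwA, hw1, hw2⟩ := hblk (e (τ v - 1)) (by rw [hte1]; omega)
        rw [hte1] at hw1
        have hwe : w = e (τ v - 1) := by
          apply hinj
          rw [hte1]
          omega
        rw [← hwe]
        exact hwA
    · rintro ⟨hvn, hvA, hor⟩
      refine ⟨by rw [hev v] at hvA; exact hvA, ?_⟩
      intro u hu
      rcases hor with h | h
      · omega
      · have hte1 : τ (e (τ v - 1)) = τ v - 1 := hte _ (by omega)
        exact ⟨e (τ v - 1), h, by rw [hte1]; omega, by rw [hte1]; omega⟩
  have hbc : G.blockCount τ A = m := by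
    have hseteq : {v : G.V | v ∈ A ∧ ∀ u, τ u < τ v → ∃ w, w ∉ A ∧ τ u ≤ τ w ∧ τ w < τ v}
        = τ ⁻¹' ↑Sf := by
      ext v
      simp only [Set.mem_setOf_eq, Set.mem_preimage, Finset.mem_coe]
      exact hmem v
    have himg : τ '' {v : G.V | v ∈ A ∧ ∀ u, τ u < τ v → ∃ w, w ∉ A ∧ τ u ≤ τ w ∧ τ w < τ v}
        = ↑Sf := by
      rw [hseteq]
      ext i
      simp only [Set.mem_image, Set.mem_preimage, Finset.mem_coe]
      constructor
      · rintro ⟨v, hv, rfl⟩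
        exact hv
      · intro hi
        have hin : i < n := by
          have := (Finset.mem_filter.mp hi).1
          simpa using this
        exact ⟨e i, by rw [hte i hin]; exact hi, hte i hin⟩
    have := Set.ncard_image_of_injective
      {v : G.V | v ∈ A ∧ ∀ u, τ u < τ v → ∃ w, w ∉ A ∧ τ u ≤ τ w ∧ τ w < τ v} hinj
    unfold Multigraph.blockCount
    rw [← this, himg, Set.ncard_coe_finset]
  -- enumerate the block starts in increasing order
  set stF := Sf.orderIsoOfFin hm.symm with hstF
  set st : ℕ → ℕ := fun t => if h : t < m then (stF ⟨t, h⟩ : ℕ) else n + t with hst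
  have st_mem : ∀ t, t < m → st t ∈ Sf := by
    intro t ht
    simp only [hst, dif_pos ht]
    exact (stF ⟨t, ht⟩).2
  have st_lt : ∀ s t, s < m → t < m → s < t → st s < st t := by
    intro s t hs ht hlt
    simp only [hst, dif_pos hs, dif_pos ht]
    have h2 : stF ⟨s, hs⟩ < stF ⟨t, ht⟩ := stF.lt_iff_lt.mpr (Fin.mk_lt_mk.mpr hlt)
    exact_mod_cast h2
  have st_le : ∀ s t, s ≤ t → t < m → st s ≤ st t := by
    intro s t hs ht
    rcases eq_or_lt_of_le hs with h | h
    · subst h; exact le_rfl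
    · exact le_of_lt (st_lt s t (by omega) ht h)
  have st_surj : ∀ i ∈ Sf, ∃ t, t < m ∧ st t = i := by
    intro i hi
    obtain ⟨t, ht⟩ := stF.surjective ⟨i, hi⟩
    refine ⟨t.1, t.2, ?_⟩
    simp only [hst, dif_pos t.2]
    rw [show (⟨t.1, t.2⟩ : Fin m) = t from rfl, ht]
  have st_lt_n : ∀ t, t < m → st t < n := by
    intro t ht
    have := (Finset.mem_filter.mp (st_mem t ht)).1
    simpa using this
  have st_prop : ∀ t, t < m → e (st t) ∈ A ∧ (st t = 0 ∨ e (st t - 1) ∉ A) := by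
    intro t ht
    exact (Finset.mem_filter.mp (st_mem t ht)).2
  -- the end of each block
  set d : ℕ → ℕ := fun t => sInf {i | st t < i ∧ (i = n ∨ e i ∉ A)} with hd
  have hdset : ∀ t, t < m → st t < d t ∧ (d t = n ∨ e (d t) ∉ A) := by
    intro t ht
    have hne : {i | st t < i ∧ (i = n ∨ e i ∉ A)}.Nonempty :=
      ⟨n, st_lt_n t ht, Or.inl rfl⟩
    exact Nat.sInf_mem hne
  have d_le_n : ∀ t, t < m → d t ≤ n := by
    intro t ht
    exact Nat.sInf_le ⟨st_lt_n t ht, Or.inl rfl⟩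
  have block_a : ∀ t, t < m → ∀ i, st t ≤ i → i < d t → e i ∈ A := by
    intro t ht i h1 h2
    rcases eq_or_lt_of_le h1 with h | h
    · rw [← h]
      exact (st_prop t ht).1
    · by_contra hcon
      have hmem2 : i ∈ {i | st t < i ∧ (i = n ∨ e i ∉ A)} := ⟨h, Or.inr hcon⟩
      have h9 : d t ≤ i := Nat.sInf_le hmem2
      omega
  have d_lt_next : ∀ t, t + 1 < m → d t < st (t + 1) := by
    intro t ht
    have h1 : st t < st (t + 1) := st_lt t (t + 1) (by omega) ht (by omega)
    have hp := st_prop (t + 1) ht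
    have hna : e (st (t + 1) - 1) ∉ A := by
      rcases hp.2 with h0 | h0
      · omega
      · exact h0
    have h2 : st t + 1 < st (t + 1) := by
      by_contra hc
      push_neg at hc
      have heq : st (t + 1) - 1 = st t := by omega
      rw [heq] at hna
      exact hna (block_a t (by omega) (st t) le_rfl (hdset t (by omega)).1)
    have h3 : d t ≤ st (t + 1) - 1 :=
      Nat.sInf_le ⟨by omega, Or.inr hna⟩
    omega
  have gap_na : ∀ t, t + 1 < m → ∀ i, d t ≤ i → i < st (t + 1) → e i ∉ A := by
    intro t ht i
    induction i using Nat.strong_induction_on with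
    | _ i IH =>
      intro h1 h2
      have hsn := st_lt_n (t + 1) ht
      rcases eq_or_lt_of_le h1 with h | h
      · rcases (hdset t (by omega)).2 with hn | hna
        · exfalso; omega
        · rw [← h]; exact hna
      · intro hcon
        have hprev : e (i - 1) ∉ A := IH (i - 1) (by omega) (by omega) (by omega)
        have hiSf : i ∈ Sf := by
          simp only [hSf, Finset.mem_filter, Finset.mem_range]
          exact ⟨by omega, hcon, Or.inr hprev⟩
        obtain ⟨t', ht', hst'⟩ := st_surj i hiSf
        have hdt := (hdset t (by omega)).1
        have hgt : t < t' := by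
          by_contra hc
          push_neg at hc
          have := st_le t' t hc (by omega)
          omega
        have hlt2 : t' < t + 1 := by
          by_contra hc
          push_neg at hc
          have := st_le (t + 1) t' hc ht'
          omega
        omega
  -- untouched gaps
  set U : ℕ → Prop := fun t => ∀ ed : G.E,
    ¬ ((d t ≤ τ (G.ends ed).1 ∧ τ (G.ends ed).1 < st (t + 1) ∧ σ (G.ends ed).2 ≤ σ v₀) ∨
       (d t ≤ τ (G.ends ed).2 ∧ τ (G.ends ed).2 < st (t + 1) ∧ σ (G.ends ed).1 ≤ σ v₀)) with hU
  -- cuts of position prefixes are bounded by the cutwidth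
  have cutPre : ∀ i, i ≤ n → G.delta {u | τ u < i} ≤ G.cutwidth := by
    intro i hi
    rcases Nat.eq_zero_or_pos i with h0 | h0
    · subst h0
      have hset : {u : G.V | τ u < 0} = ∅ := by ext u; simp
      rw [hset]
      have hzero : G.delta (∅ : Set G.V) = 0 := by
        unfold Multigraph.delta
        have hset2 : {ed : G.E |
            ¬ ((G.ends ed).1 ∈ (∅ : Set G.V) ↔ (G.ends ed).2 ∈ (∅ : Set G.V))} = ∅ := by
          ext ed; simp
        rw [hset2, Set.ncard_empty]
      omega
    · have hset : {u : G.V | τ u < i} = {u | τ u ≤ τ (e (i - 1))} := by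
        ext u
        simp only [Set.mem_setOf_eq]
        rw [hte (i - 1) (by omega)]
        omega
      rw [hset]
      exact le_trans (delta_le_cwOrd G τ _) hcw
  -- number of touched gaps is at most δ(A) ≤ cwOrd σ
  have hTcard : {t | t + 1 < m ∧ ¬ U t}.ncard ≤ G.cwOrd σ := by
    have hend : {t | t + 1 < m ∧ ¬ U t}.ncard ≤ G.delta A := by
      rcases Set.eq_empty_or_nonempty {t | t + 1 < m ∧ ¬ U t} with hE | hNe
      · rw [hE, Set.ncard_empty]
        exact Nat.zero_le _
      · have hwitness : ∀ t ∈ {t | t + 1 < m ∧ ¬ U t}, ∃ ed : G.E,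
            ((d t ≤ τ (G.ends ed).1 ∧ τ (G.ends ed).1 < st (t + 1) ∧ σ (G.ends ed).2 ≤ σ v₀) ∨
             (d t ≤ τ (G.ends ed).2 ∧ τ (G.ends ed).2 < st (t + 1) ∧ σ (G.ends ed).1 ≤ σ v₀))
            := by
          rintro t ⟨htm, hUt⟩
          simp only [hU] at hUt
          push_neg at hUt
          obtain ⟨ed, hed⟩ := hUt
          exact ⟨ed, by tauto⟩
        choose wit hwit using hwitness
        obtain ⟨t₀, ht₀⟩ := hNe
        set wit2 : ℕ → G.E := fun t =>
          if h : t ∈ {t | t + 1 < m ∧ ¬ U t} then wit t h else wit t₀ ht₀ with hwit2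
        have hwit2eq : ∀ t (h : t ∈ {t | t + 1 < m ∧ ¬ U t}), wit2 t = wit t h := by
          intro t h
          simp only [hwit2, dif_pos h]
        -- the characteristic property of the witness
        have hwitP : ∀ t (h : t ∈ {t | t + 1 < m ∧ ¬ U t}),
            ((G.ends (wit2 t)).1 ∉ A ∧ d t ≤ τ (G.ends (wit2 t)).1 ∧
              τ (G.ends (wit2 t)).1 < st (t + 1) ∧ (G.ends (wit2 t)).2 ∈ A) ∨
            ((G.ends (wit2 t)).2 ∉ A ∧ d t ≤ τ (G.ends (wit2 t)).2 ∧
              τ (G.ends (wit2 t)).2 < st (t + 1) ∧ (G.ends (wit2 t)).1 ∈ A) := by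
          intro t h
          rw [hwit2eq t h]
          rcases hwit t h with hc | hc
          · left
            refine ⟨?_, hc.1, hc.2.1, hc.2.2⟩
            have := gap_na t h.1 (τ (G.ends (wit t h)).1) hc.1 hc.2.1
            rwa [hev] at this
          · right
            refine ⟨?_, hc.1, hc.2.1, hc.2.2⟩
            have := gap_na t h.1 (τ (G.ends (wit t h)).2) hc.1 hc.2.1
            rwa [hev] at this
        have hmapsto : ∀ t ∈ {t | t + 1 < m ∧ ¬ U t},
            wit2 t ∈ {ed : G.E | ¬ ((G.ends ed).1 ∈ A ↔ (G.ends ed).2 ∈ A)} := by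
          intro t h
          rcases hwitP t h with hc | hc
          · simp only [Set.mem_setOf_eq]
            intro hiff
            exact hc.1 (hiff.mpr hc.2.2.2)
          · simp only [Set.mem_setOf_eq]
            intro hiff
            exact hc.1 (hiff.mp hc.2.2.2)
        have hinjOn : Set.InjOn wit2 {t | t + 1 < m ∧ ¬ U t} := by
          intro t h1 t' h2 heq
          by_contra hne
          -- wlog t < t'
          have hcases : t < t' ∨ t' < t := by omega
          have key : ∀ s s', s ∈ {t | t + 1 < m ∧ ¬ U t} → s' ∈ {t | t + 1 < m ∧ ¬ U t} →
              s < s' → wit2 s = wit2 s' → False := by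
            intro s s' hs hs' hlt heq2
            have hP1 := hwitP s hs
            have hP2 := hwitP s' hs'
            rw [heq2] at hP1
            have hord : st (s + 1) ≤ st s' := st_le (s + 1) s' (by omega) (by
              exact lt_trans (by omega) hs'.1)
            have hds' := (hdset s' (by have := hs'.1; omega)).1
            rcases hP1 with hc1 | hc1 <;> rcases hP2 with hc2 | hc2
            · omega
            · exact hc1.1 hc2.2.2.2
            · exact hc1.1 hc2.2.2.2
            · omega
          rcases hcases with hlt | hlt
          · exact key t t' h1 h2 hlt heq
          · exact key t' t h2 h1 hlt heq.symm
        have := Set.ncard_le_ncard_of_injOn wit2 hmapsto hinjOn (Set.toFinite _)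
        exact this
    exact le_trans hend (delta_le_cwOrd G σ v₀)
  -- chain data
  set f : ℕ → ℕ := fun t => xp G A {u | τ u < d t} with hf
  set g : ℕ → ℕ := fun t => xp G A {u | τ u < st t} with hg
  have h1 : ∀ t, t + 1 < m → U t → g t ≤ f t → f t < f (t + 1) := by
    intro t htm hUt hgf
    simp only [hU] at hUt
    exact step_core G σ v₀ τ hinj hsurj hcw hmin (st t) (d t) (st (t + 1)) (d (t + 1))
      (hdset t (by omega)).1 (d_lt_next t htm) (hdset (t + 1) htm).1 (d_le_n (t + 1) htm)
      (fun u hu1 hu2 => by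
        have := block_a t (by omega) (τ u) hu1 hu2
        rwa [hev] at this)
      (fun u hu1 hu2 => by
        have := gap_na t htm (τ u) hu1 hu2
        rwa [hev] at this)
      (fun u hu1 hu2 => by
        have := block_a (t + 1) htm (τ u) hu1 hu2
        rwa [hev] at this)
      hUt hgf
  have h2 : ∀ t, t + 1 < m → U t → g (t + 1) = f t := by
    intro t htm hUt
    simp only [hU] at hUt
    have hdlt := d_lt_next t htm
    have hset : {u : G.V | τ u < st (t + 1)}
        = {u | τ u < d t} ∪ {u | d t ≤ τ u ∧ τ u < st (t + 1)} := by
      ext u; simp only [Set.mem_setOf_eq, Set.mem_union]; omega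
    show xp G A {u | τ u < st (t + 1)} = xp G A {u | τ u < d t}
    rw [hset]
    apply xp_union
    intro ed hed
    constructor
    · intro hmem2
      rcases hed with h | h
      · have := gap_na t htm (τ (G.ends ed).1) hmem2.1 hmem2.2
        rw [hev] at this
        exact this h
      · exact hUt ed (Or.inl ⟨hmem2.1, hmem2.2, h⟩)
    · intro hmem2
      rcases hed with h | h
      · exact hUt ed (Or.inr ⟨hmem2.1, hmem2.2, h⟩)
      · have := gap_na t htm (τ (G.ends ed).2) hmem2.1 hmem2.2
        rw [hev] at this
        exact this h
  have h3 : ∀ t, t < m → f t ≤ G.cutwidth := by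
    intro t ht
    exact le_trans (xp_le_delta G A _) (cutPre (d t) (d_le_n t ht))
  have h3' : ∀ t, t < m → g t ≤ G.cutwidth := by
    intro t ht
    exact le_trans (xp_le_delta G A _) (cutPre (st t) (le_of_lt (st_lt_n t ht)))
  have hchain := chainCount G.cutwidth (G.cwOrd σ) m f g U h1 h2 h3 h3' hTcard
  rw [hbc]
  exact hchain

end CW11

end CW11Aux

open Multigraph in
/-- given an ordering `σ` of width `r`, there is an optimum-width
ordering `τ` in which every prefix of `σ` has at most `2r·cw(G) + cw(G) + 4r + 2` blocks. -/
theorem optimum_ordering_few_blocks_for_all_prefixes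
    (G : Multigraph) (σ : G.V → ℕ) (hσ : Function.Injective σ) (r : ℕ)
    (hr : G.cwOrd σ = r) :
    ∃ τ : G.V → ℕ, Function.Injective τ ∧ G.cwOrd τ = G.cutwidth ∧
      ∀ v : G.V, G.blockCount τ {u | σ u ≤ σ v} ≤
        2 * r * G.cutwidth + G.cutwidth + 4 * r + 2 := by
  classical
  -- an optimum-width ordering exists
  have hne : {w | ∃ ρ : G.V → ℕ, Function.Injective ρ ∧ G.cwOrd ρ = w}.Nonempty :=
    ⟨G.cwOrd σ, σ, hσ, rfl⟩
  have hopt : G.cutwidth ∈ {w | ∃ ρ : G.V → ℕ, Function.Injective ρ ∧ G.cwOrd ρ = w} :=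
    Nat.sInf_mem hne
  obtain ⟨τ₀, hτ₀i, hτ₀⟩ := hopt
  -- minimize the potential over injective orderings of width at most cutwidth
  set W : Set ℕ := {k | ∃ τ' : G.V → ℕ,
    (Function.Injective τ' ∧ G.cwOrd τ' ≤ G.cutwidth) ∧ CW11.Phi G σ τ' = k} with hW
  have hWne : W.Nonempty := ⟨CW11.Phi G σ τ₀, τ₀, ⟨hτ₀i, le_of_eq hτ₀⟩, rfl⟩
  obtain ⟨τ₁, ⟨hτ₁i, hτ₁cw⟩, hτ₁phi⟩ := Nat.sInf_mem hWne
  have hτ₁min : ∀ τ' : G.V → ℕ, Function.Injective τ' → G.cwOrd τ' ≤ G.cutwidth →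
      CW11.Phi G σ τ₁ ≤ CW11.Phi G σ τ' := by
    intro τ' h1 h2
    rw [hτ₁phi]
    exact Nat.sInf_le ⟨τ', ⟨h1, h2⟩, rfl⟩
  -- normalize to a ranking onto {0, …, n-1}
  set τ : G.V → ℕ := CW11.rk G τ₁ with hτ
  have hord : ∀ u v, τ₁ u ≤ τ₁ v ↔ τ u ≤ τ v :=
    fun u v => (CW11.rk_le_iff hτ₁i u v).symm
  have hτi : Function.Injective τ := CW11.rk_inj hτ₁i
  have hcwe : G.cwOrd τ₁ = G.cwOrd τ := CW11.cwOrd_congr hord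
  have hphie : CW11.Phi G σ τ₁ = CW11.Phi G σ τ := CW11.Phi_congr hord
  have hτcw : G.cwOrd τ ≤ G.cutwidth := by rw [← hcwe]; exact hτ₁cw
  have hτmin : ∀ τ' : G.V → ℕ, Function.Injective τ' → G.cwOrd τ' ≤ G.cutwidth →
      CW11.Phi G σ τ ≤ CW11.Phi G σ τ' := by
    intro τ' h1 h2
    rw [← hphie]
    exact hτ₁min τ' h1 h2
  have hbnd : ∀ v, τ v < Nat.card G.V := fun v => CW11.rk_lt_card v
  have hsurjτ : ∀ i < Nat.card G.V, ∃ v, τ v = i := CW11.rk_surj hτ₁i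
  refine ⟨τ, hτi, le_antisymm hτcw (CW11.cutwidth_le_cwOrd G τ hτi), ?_⟩
  intro v₀
  have hb := CW11.blocks_bound G σ τ hτi hbnd hsurjτ hτcw hτmin v₀
  rw [hr] at hb
  have hcr : G.cutwidth ≤ r := by
    rw [← hr]
    exact CW11.cutwidth_le_cwOrd G σ hσ
  have h1 : (r + 1) * (2 * G.cutwidth + 2)
      = 2 * r * G.cutwidth + (2 * r + 2 * G.cutwidth + 2) := by ring
  have h2 : 2 * r + 2 * G.cutwidth + 2 ≤ G.cutwidth + 4 * r + 2 := by omega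
  calc G.blockCount τ {u | σ u ≤ σ v₀} ≤ (r + 1) * (2 * G.cutwidth + 2) := hb
    _ = 2 * r * G.cutwidth + (2 * r + 2 * G.cutwidth + 2) := h1
    _ ≤ 2 * r * G.cutwidth + (G.cutwidth + 4 * r + 2) := Nat.add_le_add_left h2 _
    _ = 2 * r * G.cutwidth + G.cutwidth + 4 * r + 2 := by ring
end

section
/- Let k, w, ℓ ∈ ℕ and let G be a graph. If dcw_k(G) ≤ w and |V(G)| ≥ ℓ·(2w+1) + 2w, then G has a (2k,k)-cutwidth-edge-protrusion X with |X| ≥ ℓ. -/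
section Helpers

open Multigraph

lemma exists_inj_nat (V : Type) [Finite V] : ∃ ρ : V → ℕ, Function.Injective ρ := by
  obtain ⟨n, ⟨e⟩⟩ := Finite.exists_equiv_fin V
  exact ⟨fun v => (e v).val, fun a b h => e.injective (Fin.val_injective h)⟩

lemma delta_le_cardE (H : Multigraph) (S : Set H.V) : H.delta S ≤ Nat.card H.E := by
  have := Set.ncard_le_ncard (Set.subset_univ
    {e : H.E | ¬ ((H.ends e).1 ∈ S ↔ (H.ends e).2 ∈ S)}) Set.finite_univ
  simpa [Multigraph.delta, Set.ncard_univ] using this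

lemma delta_prefix_le_cwOrd (H : Multigraph) (ρ : H.V → ℕ) (v : H.V) :
    H.delta {u | ρ u ≤ ρ v} ≤ H.cwOrd ρ := by
  apply le_csSup
  · exact ⟨Nat.card H.E, by rintro x ⟨v, rfl⟩; exact delta_le_cardE H _⟩
  · exact ⟨v, rfl⟩

lemma exists_ord (H : Multigraph) :
    ∃ ρ : H.V → ℕ, Function.Injective ρ ∧ H.cwOrd ρ = H.cutwidth := by
  have hne : {w | ∃ ρ : H.V → ℕ, Function.Injective ρ ∧ H.cwOrd ρ = w}.Nonempty := by
    obtain ⟨ρ, hρ⟩ := exists_inj_nat H.V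
    exact ⟨_, ρ, hρ, rfl⟩
  obtain ⟨ρ, h1, h2⟩ := Nat.sInf_mem hne
  exact ⟨ρ, h1, h2⟩

lemma cutwidth_le_of (H : Multigraph) (ρ : H.V → ℕ) (hρ : Function.Injective ρ)
    (k : ℕ) (h : ∀ v, H.delta {u | ρ u ≤ ρ v} ≤ k) : H.cutwidth ≤ k := by
  have h2 : H.cwOrd ρ ≤ k := csSup_le' (by rintro x ⟨v, rfl⟩; exact h v)
  exact le_trans (Nat.sInf_le ⟨ρ, hρ, rfl⟩) h2

lemma image_val_setOf {α : Type*} (p : α → Prop) (q : α → Prop) :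
    Subtype.val '' {x : {y // p y} | q x.1} = {x | p x ∧ q x} := by
  ext x
  constructor
  · rintro ⟨⟨y, hy⟩, hq, rfl⟩; exact ⟨hy, hq⟩
  · rintro ⟨hp, hq⟩; exact ⟨⟨x, hp⟩, hq, rfl⟩

lemma ncard_subtype_set {α : Type*} {p : α → Prop} (s : Set {x // p x}) :
    s.ncard = (Subtype.val '' s).ncard :=
  (Set.ncard_image_of_injective s Subtype.val_injective).symm

lemma delta_deleteEdges (G : Multigraph) (F : Set G.E) (S : Set G.V) :
    (G.deleteEdges F).delta S
      = {e : G.E | e ∉ F ∧ ¬ ((G.ends e).1 ∈ S ↔ (G.ends e).2 ∈ S)}.ncard := by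
  unfold Multigraph.delta
  refine (ncard_subtype_set (p := fun e => e ∉ F) _).trans ?_
  congr 1
  ext e
  constructor
  · rintro ⟨⟨e, he⟩, hq, rfl⟩; exact ⟨he, hq⟩
  · rintro ⟨hp, hq⟩; exact ⟨⟨e, hp⟩, hq, rfl⟩

section Rank
variable {V : Type} [Finite V] (ρ : V → ℕ)

noncomputable def rk (v : V) : ℕ := {u | ρ u < ρ v}.ncard

lemma rk_lt_rk {u v : V} (h : ρ u < ρ v) : rk ρ u < rk ρ v := by
  apply Set.ncard_lt_ncard
  · exact ⟨fun x hx => lt_trans hx h, fun hsub => lt_irrefl (ρ u) (hsub h)⟩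
  · exact Set.toFinite _

lemma rk_le_iff (hρ : Function.Injective ρ) {u v : V} : ρ u ≤ ρ v ↔ rk ρ u ≤ rk ρ v := by
  constructor
  · intro h
    rcases eq_or_lt_of_le h with h' | h'
    · rw [hρ h']
    · exact le_of_lt (rk_lt_rk ρ h')
  · intro h
    by_contra hc
    exact absurd h (not_le.mpr (rk_lt_rk ρ (not_le.mp hc)))

lemma rk_lt_card (v : V) : rk ρ v < Nat.card V := by
  have : ({u | ρ u < ρ v}).ncard < (Set.univ : Set V).ncard := by
    apply Set.ncard_lt_ncard
    · exact ⟨Set.subset_univ _, fun hsub => lt_irrefl (ρ v) (hsub (Set.mem_univ v))⟩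
    · exact Set.finite_univ
  simpa [rk, Set.ncard_univ] using this

lemma rk_inj (hρ : Function.Injective ρ) : Function.Injective (rk ρ) := by
  intro u v h
  by_contra hne
  rcases lt_or_gt_of_ne (fun he : ρ u = ρ v => hne (hρ he)) with h' | h'
  · exact absurd h (ne_of_lt (rk_lt_rk ρ h'))
  · exact absurd h.symm (ne_of_lt (rk_lt_rk ρ h'))

lemma rk_surj (hρ : Function.Injective ρ) {m : ℕ} (hm : m < Nat.card V) :
    ∃ v, rk ρ v = m := by
  cases nonempty_fintype V
  let f : V → Fin (Nat.card V) := fun v => ⟨rk ρ v, rk_lt_card ρ v⟩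
  have hinj : Function.Injective f := by
    intro a b h
    exact rk_inj ρ hρ (congrArg Fin.val h)
  have hbij : Function.Bijective f := by
    rw [Fintype.bijective_iff_injective_and_card]
    exact ⟨hinj, by simp [Nat.card_eq_fintype_card]⟩
  obtain ⟨v, hv⟩ := hbij.2 ⟨m, hm⟩
  exact ⟨v, congrArg Fin.val hv⟩

end Rank
end Helpers
open Multigraph in
/-- if `dcw_k(G) ≤ w` and `|V(G)| ≥ ℓ(2w+1) + 2w`, then `G` has a
`(2k,k)`-cutwidth-edge-protrusion of at least `ℓ` vertices. -/
theorem exists_cutwidth_edge_protrusion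
    (k w ℓ : ℕ) (G : Multigraph)
    (hdcw : dcw k G ≤ w) (hsize : ℓ * (2 * w + 1) + 2 * w ≤ Nat.card G.V) :
    ∃ X : Set G.V, G.delta X ≤ 2 * k ∧ (G.induce X).cutwidth ≤ k ∧ ℓ ≤ X.ncard := by
  classical
  rcases Nat.eq_zero_or_pos ℓ with hℓ | hℓ
  · subst hℓ
    refine ⟨∅, ?_, ?_, by simp⟩
    · have h0 : {e : G.E | ¬ ((G.ends e).1 ∈ (∅ : Set G.V) ↔ (G.ends e).2 ∈ (∅ : Set G.V))}
          = ∅ := by ext e; simp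
      simp [Multigraph.delta, h0]
    · refine cutwidth_le_of _ (fun _ => 0) ?_ k ?_
      · intro a b h; exact absurd a.2 (Set.notMem_empty _)
      · intro v; exact absurd v.2 (Set.notMem_empty _)
  -- obtain an optimal deletion set F
  have hne : {m | ∃ F : Set G.E, (G.deleteEdges F).cutwidth ≤ k ∧ F.ncard = m}.Nonempty := by
    refine ⟨(Set.univ : Set G.E).ncard, Set.univ, ?_, rfl⟩
    obtain ⟨ρ0, hρ0⟩ := exists_inj_nat (G.deleteEdges Set.univ).V
    refine le_trans (cutwidth_le_of _ ρ0 hρ0 0 ?_) (Nat.zero_le k)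
    intro v
    haveI : IsEmpty (G.deleteEdges (Set.univ : Set G.E)).E := ⟨fun e => e.2 (Set.mem_univ e.1)⟩
    have := delta_le_cardE (G.deleteEdges Set.univ) {u | ρ0 u ≤ ρ0 v}
    simpa [Nat.card_of_isEmpty] using this
  obtain ⟨F, hFcw, hFcard⟩ := Nat.sInf_mem hne
  have hFw : F.ncard ≤ w := by rw [hFcard]; exact hdcw
  -- obtain an optimal ordering of G - F
  obtain ⟨ρ, hρinj, hρw⟩ := exists_ord (G.deleteEdges F)
  have hcut : ∀ v : G.V, (G.deleteEdges F).delta {u | ρ u ≤ ρ v} ≤ k := fun v =>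
    le_trans (delta_prefix_le_cwOrd _ ρ v) (le_trans (le_of_eq hρw) hFcw)
  -- the dirty vertices
  have hFfin : F.Finite := Set.toFinite F
  set D : Finset G.V := hFfin.toFinset.biUnion (fun e => {(G.ends e).1, (G.ends e).2}) with hD
  have hDcard : D.card ≤ 2 * w := by
    calc D.card ≤ ∑ e ∈ hFfin.toFinset, ({(G.ends e).1, (G.ends e).2} : Finset G.V).card :=
        Finset.card_biUnion_le
    _ ≤ ∑ _e ∈ hFfin.toFinset, 2 :=
        Finset.sum_le_sum (fun e _ => le_trans (Finset.card_insert_le _ _) (by simp))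
    _ = 2 * F.ncard := by
        rw [Finset.sum_const, smul_eq_mul, ← Set.ncard_eq_toFinset_card F hFfin]; ring
    _ ≤ 2 * w := Nat.mul_le_mul_left 2 hFw
  -- pigeonhole: find a clean block of ranks
  have hblock : ∃ j, j < 2 * w + 1 ∧
      ∀ v ∈ D, ¬ (j * ℓ ≤ rk ρ v ∧ rk ρ v < j * ℓ + ℓ) := by
    by_contra hc
    push_neg at hc
    choose g hg1 hg2 using hc
    let g' : Fin (2 * w + 1) → {v // v ∈ D} := fun j => ⟨g j j.2, hg1 j j.2⟩
    have hg'inj : Function.Injective g' := by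
      intro a b h
      have hval : g a a.2 = g b b.2 := congrArg Subtype.val h
      have ha := hg2 a a.2
      have hb := hg2 b b.2
      rw [hval] at ha
      have h1 : rk ρ (g b b.2) / ℓ = (a : ℕ) :=
        Nat.div_eq_of_lt_le ha.1 (by rw [Nat.add_mul, one_mul]; exact ha.2)
      have h2 : rk ρ (g b b.2) / ℓ = (b : ℕ) :=
        Nat.div_eq_of_lt_le hb.1 (by rw [Nat.add_mul, one_mul]; exact hb.2)
      exact Fin.ext (h1 ▸ h2)
    have hcard := Fintype.card_le_of_injective g' hg'inj
    rw [Fintype.card_fin, Fintype.card_coe] at hcard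
    omega
  obtain ⟨j, hj, hclean⟩ := hblock
  -- the protrusion
  set X : Set G.V := {v | j * ℓ ≤ rk ρ v ∧ rk ρ v < j * ℓ + ℓ} with hX
  have hsub : j * ℓ + ℓ ≤ Nat.card G.V := by
    calc j * ℓ + ℓ = (j + 1) * ℓ := by ring
    _ ≤ (2 * w + 1) * ℓ := Nat.mul_le_mul_right ℓ hj
    _ = ℓ * (2 * w + 1) := by ring
    _ ≤ Nat.card G.V := le_trans (Nat.le_add_right _ _) hsize
  have hend : ∀ e ∈ F, (G.ends e).1 ∉ X ∧ (G.ends e).2 ∉ X := by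
    intro e he
    constructor <;> intro hx <;>
      exact hclean _ (Finset.mem_biUnion.mpr ⟨e, hFfin.mem_toFinset.mpr he, by simp⟩) hx
  -- the size of X
  have hXcard : X.ncard = ℓ := by
    have himg : rk ρ '' X = Set.Ico (j * ℓ) (j * ℓ + ℓ) := by
      ext m
      constructor
      · rintro ⟨v, hv, rfl⟩; exact hv
      · rintro ⟨h1, h2⟩
        obtain ⟨v, hv⟩ := rk_surj ρ hρinj (lt_of_lt_of_le h2 hsub)
        exact ⟨v, ⟨hv ▸ h1, hv ▸ h2⟩, hv⟩
    have h2 : (rk ρ '' X).ncard = X.ncard := Set.ncard_image_of_injective X (rk_inj ρ hρinj)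
    rw [himg, ← Finset.coe_Ico, Set.ncard_coe_finset, Nat.card_Ico] at h2
    omega
  -- the key cut bound
  have key : ∀ P : Set G.V, (∃ b, P = {u | ρ u ≤ ρ b}) →
      {e : G.E | e ∉ F ∧ ¬ ((G.ends e).1 ∈ P ↔ (G.ends e).2 ∈ P)}.ncard ≤ k := by
    rintro P ⟨b, rfl⟩
    exact (delta_deleteEdges G F _).symm.trans_le (hcut b)
  set Plo : Set G.V := {u | rk ρ u < j * ℓ} with hPlo
  set Phi : Set G.V := {u | rk ρ u < j * ℓ + ℓ} with hPhi
  have hhi : {e : G.E | e ∉ F ∧ ¬ ((G.ends e).1 ∈ Phi ↔ (G.ends e).2 ∈ Phi)}.ncard ≤ k := by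
    obtain ⟨b, hb⟩ := rk_surj ρ hρinj (m := j * ℓ + ℓ - 1)
      (by show j * ℓ + ℓ - 1 < Nat.card G.V; omega)
    refine key Phi ⟨b, ?_⟩
    ext u
    have hiff : ρ u ≤ ρ b ↔ rk ρ u ≤ rk ρ b := rk_le_iff ρ hρinj
    rw [hb] at hiff
    simp only [hPhi, Set.mem_setOf_eq]
    exact ⟨fun h => hiff.mpr (by omega), fun h => by have := hiff.mp h; omega⟩
  have hlo : {e : G.E | e ∉ F ∧ ¬ ((G.ends e).1 ∈ Plo ↔ (G.ends e).2 ∈ Plo)}.ncard ≤ k := by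
    rcases Nat.eq_zero_or_pos (j * ℓ) with h0 | h0
    · have hempty : {e : G.E | e ∉ F ∧ ¬ ((G.ends e).1 ∈ Plo ↔ (G.ends e).2 ∈ Plo)} = ∅ := by
        ext e; simp [hPlo, h0]
      simp [hempty]
    · obtain ⟨a, ha⟩ := rk_surj ρ hρinj (m := j * ℓ - 1)
        (by show j * ℓ - 1 < Nat.card G.V; omega)
      refine key Plo ⟨a, ?_⟩
      ext u
      have hiff : ρ u ≤ ρ a ↔ rk ρ u ≤ rk ρ a := rk_le_iff ρ hρinj
      rw [ha] at hiff
      simp only [hPlo, Set.mem_setOf_eq]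
      exact ⟨fun h => hiff.mpr (by omega), fun h => by have := hiff.mp h; omega⟩
  -- δ_G(X) ≤ 2k
  have hdeltaX : G.delta X ≤ 2 * k := by
    have hsubset : {e : G.E | ¬ ((G.ends e).1 ∈ X ↔ (G.ends e).2 ∈ X)} ⊆
        {e : G.E | e ∉ F ∧ ¬ ((G.ends e).1 ∈ Plo ↔ (G.ends e).2 ∈ Plo)} ∪
        {e : G.E | e ∉ F ∧ ¬ ((G.ends e).1 ∈ Phi ↔ (G.ends e).2 ∈ Phi)} := by
      intro e he
      simp only [Set.mem_setOf_eq] at he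
      have heF : e ∉ F := by
        intro hf
        obtain ⟨h1, h2⟩ := hend e hf
        exact he (iff_of_false h1 h2)
      simp only [Set.mem_union, Set.mem_setOf_eq, hX, hPlo, hPhi] at he ⊢
      refine Or.imp (fun h => ⟨heF, h⟩) (fun h => ⟨heF, h⟩) ?_
      omega
    calc G.delta X ≤ ({e : G.E | e ∉ F ∧ ¬ ((G.ends e).1 ∈ Plo ↔ (G.ends e).2 ∈ Plo)} ∪
          {e : G.E | e ∉ F ∧ ¬ ((G.ends e).1 ∈ Phi ↔ (G.ends e).2 ∈ Phi)}).ncard :=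
        Set.ncard_le_ncard hsubset (Set.toFinite _)
    _ ≤ _ + _ := Set.ncard_union_le _ _
    _ ≤ k + k := add_le_add hlo hhi
    _ = 2 * k := (two_mul k).symm
  -- cutwidth of G[X] ≤ k
  have hind : (G.induce X).cutwidth ≤ k := by
    refine cutwidth_le_of (G.induce X) (fun v => ρ v.1) (fun a b h => Subtype.ext (hρinj h)) k ?_
    intro v
    unfold Multigraph.delta
    refine (ncard_subtype_set (p := fun e => (G.ends e).1 ∈ X ∧ (G.ends e).2 ∈ X) _).trans_le ?_
    have hsub2 : Subtype.val ''
        {e : (G.induce X).E |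
          ¬ (((G.induce X).ends e).1 ∈ {u | ρ u.1 ≤ ρ v.1} ↔
            ((G.induce X).ends e).2 ∈ {u | ρ u.1 ≤ ρ v.1})} ⊆
        {e : G.E | e ∉ F ∧ ¬ ((G.ends e).1 ∈ {u | ρ u ≤ ρ v.1} ↔
          (G.ends e).2 ∈ {u | ρ u ≤ ρ v.1})} := by
      rintro x ⟨⟨e, he⟩, hq, rfl⟩
      exact ⟨fun hf => (hend e hf).1 he.1, hq⟩
    exact le_trans (Set.ncard_le_ncard hsub2 (Set.toFinite _)) (key _ ⟨v.1, rfl⟩)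
  exact ⟨X, hdeltaX, hind, le_of_eq hXcard.symm⟩
end
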